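/- With the Bedford-McMullen setup, let $\underline{p}_D = (1/D)_{(a,b)\in Q}$, $\underline{p}_R = (1/(T_a R))_{(a,b)\in Q}$ and $\underline{p}_d = \left(T_a^{1/\tau - 1} / \sum_{a'\in S} T_{a'}^{1/\tau}\right)_{(a,b)\in Q}$ with $\tau > 1$. Then $h_r(\underline{p}_D) \leq h_r(\underline{p}_d) \leq h_r(\underline{p}_R) = \log R$ and $h(\underline{p}_R) \leq h(\underline{p}_d) \leq h(\underline{p}_D) = \log D$, with all inequalities being equalities if and only if all $T_a$ are equal. -/

import Mathlib

open Real Finset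

lemma gibbs_aux {ι : Type*} [Fintype ι] (w v : ι → ℝ) (hw : ∀ i, 0 < w i) (hv : ∀ i, 0 < v i)
    (hw1 : ∑ i, w i = 1) (hv1 : ∑ i, v i = 1) :
    ∑ i, w i * Real.log (v i) ≤ ∑ i, w i * Real.log (w i) ∧
      ((∑ i, w i * Real.log (v i)) = ∑ i, w i * Real.log (w i) ↔ ∀ i, w i = v i) := by
  have key : ∀ i : ι, w i * Real.log (v i) - w i * Real.log (w i) ≤ v i - w i := by
    intro i
    have h1 : Real.log (v i) - Real.log (w i) = Real.log (v i / w i) :=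
      (Real.log_div (hv i).ne' (hw i).ne').symm
    have h2 : Real.log (v i / w i) ≤ v i / w i - 1 :=
      Real.log_le_sub_one_of_pos (div_pos (hv i) (hw i))
    have h3 : w i * Real.log (v i / w i) ≤ w i * (v i / w i - 1) :=
      mul_le_mul_of_nonneg_left h2 (hw i).le
    have h4 : w i * (v i / w i - 1) = v i - w i := by
      rw [mul_sub, mul_div_cancel₀ _ (hw i).ne', mul_one]
    calc w i * Real.log (v i) - w i * Real.log (w i)
        = w i * (Real.log (v i) - Real.log (w i)) := by ring
      _ = w i * Real.log (v i / w i) := by rw [h1]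
      _ ≤ v i - w i := h4 ▸ h3
  have keystrict : ∀ i : ι, w i ≠ v i →
      w i * Real.log (v i) - w i * Real.log (w i) < v i - w i := by
    intro i hne
    have h1 : Real.log (v i) - Real.log (w i) = Real.log (v i / w i) :=
      (Real.log_div (hv i).ne' (hw i).ne').symm
    have hneq : v i / w i ≠ 1 := by
      intro hcontra
      exact hne ((div_eq_one_iff_eq (hw i).ne').mp hcontra).symm
    have h2 : Real.log (v i / w i) < v i / w i - 1 :=
      Real.log_lt_sub_one_of_pos (div_pos (hv i) (hw i)) hneq
    have h3 : w i * Real.log (v i / w i) < w i * (v i / w i - 1) :=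
      (mul_lt_mul_iff_right₀ (hw i)).mpr h2
    have h4 : w i * (v i / w i - 1) = v i - w i := by
      rw [mul_sub, mul_div_cancel₀ _ (hw i).ne', mul_one]
    calc w i * Real.log (v i) - w i * Real.log (w i)
        = w i * (Real.log (v i) - Real.log (w i)) := by ring
      _ = w i * Real.log (v i / w i) := by rw [h1]
      _ < v i - w i := h4 ▸ h3
  have sum_le : ∑ i, (w i * Real.log (v i) - w i * Real.log (w i)) ≤ ∑ i, (v i - w i) :=
    Finset.sum_le_sum fun i _ => key i
  have sum_rhs : ∑ i : ι, (v i - w i) = 0 := by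
    rw [Finset.sum_sub_distrib, hw1, hv1]; ring
  rw [Finset.sum_sub_distrib, sum_rhs] at sum_le
  refine ⟨by linarith, ?_, ?_⟩
  · intro heq
    by_contra hne
    push_neg at hne
    obtain ⟨i0, hi0⟩ := hne
    have strict : ∑ i, (w i * Real.log (v i) - w i * Real.log (w i)) < ∑ i, (v i - w i) :=
      Finset.sum_lt_sum (fun i _ => key i) ⟨i0, Finset.mem_univ _, keystrict i0 hi0⟩
    rw [Finset.sum_sub_distrib, sum_rhs] at strict
    linarith
  · intro hall
    exact Finset.sum_congr rfl fun i _ => by rw [hall i]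

lemma cheb_aux {ι : Type*} [Fintype ι] (w f g : ι → ℝ) (hw : ∀ i, 0 ≤ w i)
    (hmono : ∀ i j, 0 ≤ (f i - f j) * (g i - g j)) :
    (∑ i, w i * f i) * (∑ j, w j * g j) ≤ (∑ i, w i) * (∑ i, w i * (f i * g i)) := by
  have key : (0:ℝ) ≤ ∑ i : ι, ∑ j : ι, w i * w j * ((f i - f j) * (g i - g j)) :=
    Finset.sum_nonneg fun i _ => Finset.sum_nonneg fun j _ =>
      mul_nonneg (mul_nonneg (hw i) (hw j)) (hmono i j)
  have expand : ∑ i : ι, ∑ j : ι, w i * w j * ((f i - f j) * (g i - g j))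
      = 2 * ((∑ i, w i) * (∑ i, w i * (f i * g i)) - (∑ i, w i * f i) * (∑ j, w j * g j)) := by
    have hterm : ∀ i j : ι, w i * w j * ((f i - f j) * (g i - g j))
        = w i * (f i * g i) * w j + w i * (w j * (f j * g j))
          - w i * f i * (w j * g j) - w i * g i * (w j * f j) := by
      intro i j; ring
    simp_rw [hterm, Finset.sum_sub_distrib, Finset.sum_add_distrib, ← Finset.mul_sum,
      ← Finset.sum_mul]
    ring
  rw [expand] at key
  linarith
set_option maxHeartbeats 1000000 in
theorem stmt8 (S : Type*) [Fintype S] [Nonempty S] (P : S → Type*) [∀ a, Fintype (P a)]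
    [∀ a, Nonempty (P a)] (τ : ℝ) (hτ : 1 < τ) :
    let R : ℝ := Fintype.card S
    let D : ℝ := Fintype.card (Σ a : S, P a)
    let T : S → ℝ := fun a => Fintype.card (P a)
    let pD : (Σ a : S, P a) → ℝ := fun _ => 1 / D
    let pR : (Σ a : S, P a) → ℝ := fun q => 1 / (T q.1 * R)
    let pd : (Σ a : S, P a) → ℝ := fun q => T q.1 ^ (1 / τ - 1) / ∑ a' : S, T a' ^ (1 / τ)
    let h : ((Σ a : S, P a) → ℝ) → ℝ := fun p => -∑ q : (Σ a : S, P a), p q * Real.log (p q)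
    let hr : ((Σ a : S, P a) → ℝ) → ℝ := fun p =>
      -∑ a : S, (∑ b : P a, p ⟨a, b⟩) * Real.log (∑ b : P a, p ⟨a, b⟩)
    hr pD ≤ hr pd ∧ hr pd ≤ hr pR ∧ hr pR = Real.log R ∧
      h pR ≤ h pd ∧ h pd ≤ h pD ∧ h pD = Real.log D ∧
      ((hr pD = hr pd ∧ hr pd = hr pR ∧ h pR = h pd ∧ h pd = h pD) ↔
        ∀ a a' : S, Fintype.card (P a) = Fintype.card (P a')) := by
  intro R D T pD pR pd h hr
  have hRdef : R = (Fintype.card S : ℝ) := rfl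
  have hDdef : D = (Fintype.card (Σ a : S, P a) : ℝ) := rfl
  have hTdef : T = fun a => (Fintype.card (P a) : ℝ) := rfl
  have hpD : pD = fun _ => 1 / D := rfl
  have hpR : pR = fun q => 1 / (T q.1 * R) := rfl
  have hpd : pd = fun q => T q.1 ^ (1 / τ - 1) / ∑ a' : S, T a' ^ (1 / τ) := rfl
  have hh : h = fun p => -∑ q : (Σ a : S, P a), p q * Real.log (p q) := rfl
  have hhr : hr = fun p =>
      -∑ a : S, (∑ b : P a, p ⟨a, b⟩) * Real.log (∑ b : P a, p ⟨a, b⟩) := rfl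
  set s : ℝ := 1 / τ with hs_def
  have hτ0 : (0:ℝ) < τ := by linarith
  have hs0 : 0 < s := by rw [hs_def]; positivity
  have hs1 : s < 1 := by rw [hs_def, div_lt_one hτ0]; linarith
  have hT : ∀ a, (0:ℝ) < T a := fun a => by
    show (0:ℝ) < ((Fintype.card (P a) : ℕ) : ℝ)
    exact_mod_cast Fintype.card_pos
  have hRpos : (0:ℝ) < R := by
    rw [hRdef]; exact_mod_cast Fintype.card_pos
  have hDpos : (0:ℝ) < D := by
    have : Nonempty ((a : S) × P a) := ⟨⟨Classical.arbitrary S, Classical.arbitrary _⟩⟩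
    rw [hDdef]; exact_mod_cast Fintype.card_pos
  have hDsum : D = ∑ a : S, T a := by
    rw [hDdef, hTdef]
    rw [Fintype.card_sigma]
    push_cast
    rfl
  set Z : ℝ := ∑ a : S, T a ^ s with hZ_def
  have hZpos : 0 < Z := Finset.sum_pos (fun a _ => Real.rpow_pos_of_pos (hT a) s)
    Finset.univ_nonempty
  set v : S → ℝ := fun a => T a ^ s / Z with hv_def
  set u : S → ℝ := fun a => T a / D with hu_def
  have hvpos : ∀ a, 0 < v a := fun a => div_pos (Real.rpow_pos_of_pos (hT a) s) hZpos
  have hupos : ∀ a, 0 < u a := fun a => div_pos (hT a) hDpos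
  have hvsum : ∑ a : S, v a = 1 := by
    rw [hv_def]
    rw [← Finset.sum_div]
    exact div_self hZpos.ne'
  have husum : ∑ a : S, u a = 1 := by
    rw [hu_def]
    rw [← Finset.sum_div, ← hDsum]
    exact div_self hDpos.ne'
  have hunif_pos : ∀ a : S, (0:ℝ) < 1 / R := fun _ => by positivity
  have hunif_sum : ∑ _a : S, (1:ℝ) / R = 1 := by
    rw [Finset.sum_const, Finset.card_univ, nsmul_eq_mul, ← hRdef]
    field_simp
  -- sigma sums
  have sigma_sum : ∀ F : (Σ a : S, P a) → ℝ, ∑ q : (Σ a : S, P a), F q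
      = ∑ a : S, ∑ b : P a, F ⟨a, b⟩ := by
    intro F
    rw [← Finset.univ_sigma_univ, Finset.sum_sigma]
  have row_const : ∀ (a : S) (c : ℝ), ∑ _b : P a, c = T a * c := by
    intro a c
    rw [Finset.sum_const, Finset.card_univ, nsmul_eq_mul, hTdef]
  -- T rpow arithmetic
  have hTs : ∀ a, T a * T a ^ (s - 1) = T a ^ s := by
    intro a
    have : T a ^ s = T a ^ (1 + (s - 1)) := by ring_nf
    rw [this, Real.rpow_add (hT a), Real.rpow_one]
  -- row sums
  have rowD : ∀ a : S, ∑ b : P a, pD ⟨a, b⟩ = u a := by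
    intro a
    rw [hpD, hu_def]
    rw [row_const a (1 / D)]
    field_simp
  have rowR : ∀ a : S, ∑ b : P a, pR ⟨a, b⟩ = 1 / R := by
    intro a
    have e : ∀ b : P a, pR ⟨a, b⟩ = 1 / (T a * R) := fun b => rfl
    rw [Finset.sum_congr rfl fun b _ => e b, row_const a _]
    field_simp [(hT a).ne']
  have rowd : ∀ a : S, ∑ b : P a, pd ⟨a, b⟩ = v a := by
    intro a
    have e : ∀ b : P a, pd ⟨a, b⟩ = T a ^ (s - 1) / Z := fun b => rfl
    rw [Finset.sum_congr rfl fun b _ => e b, row_const a _, mul_div_assoc', hTs a]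
  -- hr formulas
  have hrD_eq : hr pD = -∑ a : S, u a * Real.log (u a) := by
    rw [hhr]
    simp only [neg_inj]
    exact Finset.sum_congr rfl fun a _ => by rw [rowD a]
  have hrR_eq : hr pR = Real.log R := by
    rw [hhr]
    simp only
    rw [Finset.sum_congr rfl fun a _ => by rw [rowR a]]
    rw [Finset.sum_const, Finset.card_univ, nsmul_eq_mul, ← hRdef, one_div, Real.log_inv]
    field_simp
  have hrd_eq : hr pd = -∑ a : S, v a * Real.log (v a) := by
    rw [hhr]
    simp only [neg_inj]
    exact Finset.sum_congr rfl fun a _ => by rw [rowd a]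
  -- log of v
  have hxlog : ∀ a : S, Real.log (v a) = s * Real.log (T a) - Real.log Z := by
    intro a
    show Real.log (T a ^ s / Z) = s * Real.log (T a) - Real.log Z
    rw [Real.log_div (Real.rpow_pos_of_pos (hT a) s).ne' hZpos.ne', Real.log_rpow (hT a)]
  -- h formulas
  have hD_eq : h pD = Real.log D := by
    rw [hh, hpD]
    simp only
    rw [Finset.sum_const, Finset.card_univ, nsmul_eq_mul, ← hDdef, one_div, Real.log_inv]
    field_simp
  have hR_eq : h pR = Real.log R + (1/R) * ∑ a : S, Real.log (T a) := by
    rw [hh]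
    simp only
    rw [sigma_sum]
    have e : ∀ a : S, ∑ b : P a, pR ⟨a, b⟩ * Real.log (pR ⟨a, b⟩)
        = -((1/R) * (Real.log (T a) + Real.log R)) := by
      intro a
      have e1 : ∀ b : P a, pR ⟨a, b⟩ * Real.log (pR ⟨a, b⟩)
          = 1 / (T a * R) * Real.log (1 / (T a * R)) := fun b => rfl
      rw [Finset.sum_congr rfl fun b _ => e1 b, row_const a _]
      rw [one_div, Real.log_inv, Real.log_mul (hT a).ne' hRpos.ne']
      linear_combination (R⁻¹ * -(Real.log (T a) + Real.log R)) * mul_inv_cancel₀ (hT a).ne'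
    rw [Finset.sum_congr rfl fun a _ => e a, Finset.sum_neg_distrib, neg_neg]
    rw [Finset.sum_congr rfl
      (fun a _ => mul_add (1/R) (Real.log (T a)) (Real.log R))]
    rw [Finset.sum_add_distrib, ← Finset.mul_sum, Finset.sum_const, Finset.card_univ,
      nsmul_eq_mul, ← hRdef]
    field_simp
    ring
  have hd_eq : h pd = Real.log Z + (1 - s) * ∑ a : S, v a * Real.log (T a) := by
    rw [hh]
    simp only
    rw [sigma_sum]
    have e : ∀ a : S, ∑ b : P a, pd ⟨a, b⟩ * Real.log (pd ⟨a, b⟩)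
        = v a * ((s - 1) * Real.log (T a) - Real.log Z) := by
      intro a
      have e1 : ∀ b : P a, pd ⟨a, b⟩ * Real.log (pd ⟨a, b⟩)
          = (T a ^ (s-1) / Z) * Real.log (T a ^ (s-1) / Z) := fun b => rfl
      rw [Finset.sum_congr rfl fun b _ => e1 b, row_const a _]
      rw [Real.log_div (Real.rpow_pos_of_pos (hT a) (s-1)).ne' hZpos.ne', Real.log_rpow (hT a)]
      have harith : T a * (T a ^ (s-1) / Z * ((s-1) * Real.log (T a) - Real.log Z))
          = (T a * T a ^ (s-1)) / Z * ((s-1) * Real.log (T a) - Real.log Z) := by ring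
      rw [harith, hTs a]
    rw [Finset.sum_congr rfl fun a _ => e a]
    have expand : ∑ a : S, v a * ((s - 1) * Real.log (T a) - Real.log Z)
        = (s - 1) * (∑ a : S, v a * Real.log (T a)) - Real.log Z * ∑ a : S, v a := by
      have e2 : ∀ a : S, v a * ((s - 1) * Real.log (T a) - Real.log Z)
          = (s - 1) * (v a * Real.log (T a)) - Real.log Z * v a := fun a => by ring
      rw [Finset.sum_congr rfl fun a _ => e2 a, Finset.sum_sub_distrib, ← Finset.mul_sum,
        ← Finset.mul_sum]
    rw [expand, hvsum]
    ring
  -- Gibbs applications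
  obtain ⟨g2le, g2iff⟩ := gibbs_aux v (fun _ => 1/R) hvpos hunif_pos hvsum hunif_sum
  beta_reduce at g2le g2iff
  have hvlogR : ∑ a : S, v a * Real.log (1/R) = -Real.log R := by
    rw [← Finset.sum_mul, hvsum, one_mul, one_div, Real.log_inv]
  have ineq2 : hr pd ≤ hr pR := by
    rw [hrd_eq, hrR_eq]
    rw [hvlogR] at g2le
    linarith
  -- h pd ≤ h pD
  have hpdpos : ∀ q : (Σ a : S, P a), 0 < pd q := fun q => by
    show (0:ℝ) < T q.1 ^ (s-1) / Z
    exact div_pos (Real.rpow_pos_of_pos (hT q.1) _) hZpos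
  have hpDpos : ∀ q : (Σ a : S, P a), 0 < pD q := fun q => by
    show (0:ℝ) < 1/D
    positivity
  have hpdsum : ∑ q : (Σ a : S, P a), pd q = 1 := by
    rw [sigma_sum pd, Finset.sum_congr rfl fun a _ => rowd a, hvsum]
  have hpDsum : ∑ q : (Σ a : S, P a), pD q = 1 := by
    rw [sigma_sum pD, Finset.sum_congr rfl fun a _ => rowD a, husum]
  obtain ⟨g4le, -⟩ := gibbs_aux pd pD hpdpos hpDpos hpdsum hpDsum
  have hpDlog : ∑ q : (Σ a : S, P a), pd q * Real.log (pD q) = -Real.log D := by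
    have e : ∀ q : (Σ a : S, P a), Real.log (pD q) = -Real.log D := fun q => by
      show Real.log (1/D) = -Real.log D
      rw [one_div, Real.log_inv]
    rw [Finset.sum_congr rfl fun q _ => by rw [e q]]
    have e2 : ∀ q : (Σ a : S, P a), pd q * -Real.log D = pd q * (-Real.log D) := fun q => rfl
    rw [← Finset.sum_mul, hpdsum, one_mul]
  have ineq4 : h pd ≤ h pD := by
    rw [hD_eq, hh]
    simp only
    rw [hpDlog] at g4le
    linarith
  -- Chebyshev helper
  have mono_helper : ∀ (t : ℝ), 0 ≤ t → ∀ i j : S,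
      0 ≤ (Real.log (T i) - Real.log (T j)) * (T i ^ t - T j ^ t) := by
    intro t ht i j
    rcases le_total (T i) (T j) with hle | hle
    · have l1 : Real.log (T i) ≤ Real.log (T j) := Real.log_le_log (hT i) hle
      have l2 : T i ^ t ≤ T j ^ t := Real.rpow_le_rpow (hT i).le hle ht
      calc (0:ℝ) ≤ (Real.log (T j) - Real.log (T i)) * (T j ^ t - T i ^ t) :=
            mul_nonneg (by linarith) (by linarith)
        _ = (Real.log (T i) - Real.log (T j)) * (T i ^ t - T j ^ t) := by ring
    · have l1 : Real.log (T j) ≤ Real.log (T i) := Real.log_le_log (hT j) hle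
      have l2 : T j ^ t ≤ T i ^ t := Real.rpow_le_rpow (hT j).le hle ht
      exact mul_nonneg (by linarith) (by linarith)
  have hTsplit : ∀ a : S, T a ^ s * T a ^ (1-s) = T a := by
    intro a
    rw [← Real.rpow_add (hT a)]
    have e : s + (1 - s) = 1 := by ring
    rw [e, Real.rpow_one]
  -- hr pD ≤ hr pd
  obtain ⟨g3le, -⟩ := gibbs_aux u v hupos hvpos husum hvsum
  have hvL : ∑ a : S, v a * Real.log (T a) = (∑ a : S, T a ^ s * Real.log (T a)) / Z := by
    rw [Finset.sum_div]
    exact Finset.sum_congr rfl fun a _ => by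
      show T a ^ s / Z * Real.log (T a) = T a ^ s * Real.log (T a) / Z
      ring
  have huL : ∑ a : S, u a * Real.log (T a) = (∑ a : S, T a * Real.log (T a)) / D := by
    rw [Finset.sum_div]
    exact Finset.sum_congr rfl fun a _ => by
      show T a / D * Real.log (T a) = T a * Real.log (T a) / D
      ring
  have cheb1 := cheb_aux (fun a : S => T a ^ s) (fun a => Real.log (T a)) (fun a => T a ^ (1-s))
    (fun a => (Real.rpow_pos_of_pos (hT a) s).le) (fun i j => mono_helper (1-s) (by linarith) i j)
  beta_reduce at cheb1
  have hTsplit2 : ∀ a : S, T a ^ s * (Real.log (T a) * T a ^ (1-s)) = T a * Real.log (T a) := by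
    intro a
    calc T a ^ s * (Real.log (T a) * T a ^ (1-s))
        = (T a ^ s * T a ^ (1-s)) * Real.log (T a) := by ring
      _ = T a * Real.log (T a) := by rw [hTsplit a]
  rw [Finset.sum_congr rfl fun a _ => hTsplit a,
    Finset.sum_congr rfl fun a _ => hTsplit2 a, ← hDsum, ← hZ_def] at cheb1
  -- cheb1 : (∑ T^s L) * D ≤ Z * (∑ T L)
  have key31 : ∑ a : S, v a * Real.log (T a) ≤ ∑ a : S, u a * Real.log (T a) := by
    rw [hvL, huL, div_le_div_iff₀ hZpos hDpos]
    linarith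
  have hvlogv : ∑ a : S, v a * Real.log (v a)
      = s * (∑ a : S, v a * Real.log (T a)) - Real.log Z := by
    rw [Finset.sum_congr rfl fun a _ => by rw [hxlog a]]
    have e : ∀ a : S, v a * (s * Real.log (T a) - Real.log Z)
        = s * (v a * Real.log (T a)) - Real.log Z * v a := fun a => by ring
    rw [Finset.sum_congr rfl fun a _ => e a, Finset.sum_sub_distrib, ← Finset.mul_sum,
      ← Finset.mul_sum, hvsum]
    ring
  have hulogv : ∑ a : S, u a * Real.log (v a)
      = s * (∑ a : S, u a * Real.log (T a)) - Real.log Z := by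
    rw [Finset.sum_congr rfl fun a _ => by rw [hxlog a]]
    have e : ∀ a : S, u a * (s * Real.log (T a) - Real.log Z)
        = s * (u a * Real.log (T a)) - Real.log Z * u a := fun a => by ring
    rw [Finset.sum_congr rfl fun a _ => e a, Finset.sum_sub_distrib, ← Finset.mul_sum,
      ← Finset.mul_sum, husum]
    ring
  have ineq3 : hr pD ≤ hr pd := by
    rw [hrD_eq, hrd_eq]
    rw [hulogv] at g3le
    have h1 : s * (∑ a : S, v a * Real.log (T a)) ≤ s * (∑ a : S, u a * Real.log (T a)) :=
      mul_le_mul_of_nonneg_left key31 hs0.le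
    linarith [hvlogv]
  -- h pR ≤ h pd
  obtain ⟨g5le, -⟩ := gibbs_aux (fun _ : S => 1/R) v hunif_pos hvpos hunif_sum hvsum
  beta_reduce at g5le
  have lhs5 : ∑ a : S, 1/R * Real.log (v a)
      = s * ((1/R) * ∑ a : S, Real.log (T a)) - Real.log Z := by
    rw [← Finset.mul_sum, Finset.sum_congr rfl fun a _ => hxlog a, Finset.sum_sub_distrib,
      ← Finset.mul_sum, Finset.sum_const, Finset.card_univ, nsmul_eq_mul, ← hRdef]
    field_simp
  have rhs5 : ∑ _a : S, 1/R * Real.log (1/R) = -Real.log R := by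
    rw [Finset.sum_const, Finset.card_univ, nsmul_eq_mul, ← hRdef, one_div, Real.log_inv,
      ← mul_assoc, mul_inv_cancel₀ hRpos.ne', one_mul]
  have stepa : Real.log R + s * ((1/R) * ∑ a : S, Real.log (T a)) ≤ Real.log Z := by
    rw [lhs5, rhs5] at g5le
    linarith
  have cheb2 := cheb_aux (fun _ : S => (1:ℝ)) (fun a => Real.log (T a)) (fun a => T a ^ s)
    (fun _ => zero_le_one) (fun i j => mono_helper s hs0.le i j)
  beta_reduce at cheb2
  simp only [one_mul] at cheb2
  have hsum1 : ∑ _a : S, (1:ℝ) = R := by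
    rw [Finset.sum_const, Finset.card_univ, nsmul_eq_mul, ← hRdef, mul_one]
  have commL : ∑ a : S, Real.log (T a) * T a ^ s = ∑ a : S, T a ^ s * Real.log (T a) :=
    Finset.sum_congr rfl fun a _ => mul_comm _ _
  rw [hsum1, ← hZ_def, commL] at cheb2
  -- cheb2 : (∑ L) * Z ≤ R * (∑ T^s L)
  have key42 : (1/R) * ∑ a : S, Real.log (T a) ≤ ∑ a : S, v a * Real.log (T a) := by
    rw [hvL]
    have e : (1/R) * ∑ a : S, Real.log (T a) = (∑ a : S, Real.log (T a)) / R := by ring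
    rw [e, div_le_div_iff₀ hRpos hZpos]
    linarith
  have ineq5 : h pR ≤ h pd := by
    rw [hR_eq, hd_eq]
    have hstep : (1-s) * ((1/R) * ∑ a : S, Real.log (T a))
        ≤ (1-s) * ∑ a : S, v a * Real.log (T a) :=
      mul_le_mul_of_nonneg_left key42 (by linarith)
    linarith [stepa, hstep]
  refine ⟨ineq3, ineq2, hrR_eq, ineq5, ineq4, hD_eq, ?_, ?_⟩
  · -- forward
    rintro ⟨-, h2, -, -⟩
    have heq : ∑ a : S, v a * Real.log (1/R) = ∑ a : S, v a * Real.log (v a) := by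
      rw [hvlogR]
      rw [hrd_eq, hrR_eq] at h2
      linarith
    have hva := g2iff.mp heq
    intro a a'
    have ha2 : T a ^ s / Z = 1/R := hva a
    have ha2' : T a' ^ s / Z = 1/R := hva a'
    have e1 : T a ^ s / Z = T a' ^ s / Z := by rw [ha2, ha2']
    field_simp at e1
    have e2 : T a = T a' := by
      have := congrArg (fun x : ℝ => x ^ s⁻¹) e1
      simpa [Real.rpow_rpow_inv (hT a).le hs0.ne', Real.rpow_rpow_inv (hT a').le hs0.ne']
        using this
    have e3 : ((Fintype.card (P a) : ℕ) : ℝ) = ((Fintype.card (P a') : ℕ) : ℝ) := e2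
    exact_mod_cast e3
  · -- backward
    intro hall
    have hTc : ∀ a a' : S, T a = T a' := fun a a' => by
      show ((Fintype.card (P a) : ℕ) : ℝ) = ((Fintype.card (P a') : ℕ) : ℝ)
      exact_mod_cast hall a a'
    obtain ⟨a₀⟩ := (inferInstance : Nonempty S)
    have hZc : Z = R * T a₀ ^ s := by
      rw [hZ_def, Finset.sum_congr rfl fun a _ => by rw [hTc a a₀]]
      rw [Finset.sum_const, Finset.card_univ, nsmul_eq_mul, ← hRdef]
    have hDc : D = R * T a₀ := by
      rw [hDsum, Finset.sum_congr rfl fun a _ => hTc a a₀]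
      rw [Finset.sum_const, Finset.card_univ, nsmul_eq_mul, ← hRdef]
    have hpd_pR : pd = pR := by
      funext q
      show T q.1 ^ (s-1) / Z = 1 / (T q.1 * R)
      rw [hTc q.1 a₀, hZc]
      rw [div_eq_div_iff (by positivity) (by positivity)]
      have e : T a₀ ^ (s-1) * (T a₀ * R) = (T a₀ * T a₀ ^ (s-1)) * R := by ring
      rw [e, hTs a₀]
      ring
    have hpR_pD : pR = pD := by
      funext q
      show 1 / (T q.1 * R) = 1 / D
      rw [hTc q.1 a₀, hDc]
      ring
    rw [hpd_pR, hpR_pD]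
    exact ⟨rfl, rfl, rfl, rfl⟩
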